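/- arXiv:2403.14043 — 10 statements merged into one kernel-verified Lean document; each statement's English description precedes it below -/
import Mathlib

section
/- For any relational frame (X, ◁), the following are equivalent: (a) for every c_◁-fixpoint A, A ∩ ¬_◁(A) = c_◁(∅); (b) ◁ is pseudo-reflexive, i.e., for every x ∈ X such that there exists some y with y ◁ x, there exists z with z ◁ x such that z pre-refines x. -/
/-- The closure operator `c_◁` of a relational frame `(X, ◁)`, where `lt y x` means `y ◁ x`. -/
def clOp {X : Type*} (lt : X → X → Prop) (A : Set X) : Set X :=
  {x | ∀ y, lt y x → ∃ z, lt y z ∧ z ∈ A}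

/-- The negation operation `¬_◁` of a relational frame. -/
def ngOp {X : Type*} (lt : X → X → Prop) (A : Set X) : Set X :=
  {x | ∀ y, lt y x → y ∉ A}

/-- The necessity operation `□_R`. -/
def boxOp {X : Type*} (R : X → X → Prop) (A : Set X) : Set X :=
  {x | ∀ y, R x y → y ∈ A}

/-- The possibility operation `◇_Q`. -/
def diaOp {X : Type*} (lt Q : X → X → Prop) (A : Set X) : Set X :=
  {x | ∀ x', lt x' x → ∃ y' y, Q x' y' ∧ lt y' y ∧ y ∈ A}

/-- The defining condition of a modal frame (interaction of `R` and `◁`). -/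
def IsModalFrame {X : Type*} (lt R : X → X → Prop) : Prop :=
  ∀ x y z, R x y → lt z y →
    ∃ x', lt x' x ∧ ∀ x'', lt x' x'' → ∃ y'', R x'' y'' ∧ lt z y''

/-- The additivity condition of a modal frame (interaction of `Q` and `◁`). -/
def IsAdditiveFrame {X : Type*} (lt Q : X → X → Prop) : Prop :=
  ∀ x y z, Q x y → lt y z →
    ∃ x', lt x x' ∧ ∀ x'', lt x'' x' → ∃ y'', Q x'' y'' ∧ lt y'' z

/-- The negativity condition of a modal frame. -/
def IsNegativeFrame {X : Type*} (lt R Q : X → X → Prop) : Prop :=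
  ∀ x y z, R x y → lt z y →
    ∃ x', lt x' x ∧ ∀ x'', lt x'' x' → ∃ y'', Q x'' y'' ∧ lt y'' z

/-- `z` pre-refines `x`. -/
def PreRefines {X : Type*} (lt : X → X → Prop) (z x : X) : Prop :=
  ∀ w, lt w z → lt w x

/-- `◁` is pseudo-reflexive. -/
def PseudoRefl {X : Type*} (lt : X → X → Prop) : Prop :=
  ∀ x, (∃ y, lt y x) → ∃ z, lt z x ∧ PreRefines lt z x

/-- `◁` is pseudo-symmetric. -/
def PseudoSymm {X : Type*} (lt : X → X → Prop) : Prop :=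
  ∀ x y, lt y x → ∃ z, lt z y ∧ PreRefines lt z x

lemma clOp_idem {X : Type*} (lt : X → X → Prop) (B : Set X) :
    clOp lt (clOp lt B) = clOp lt B := by
  ext u
  constructor
  · intro hu v hv
    obtain ⟨z, hvz, hz⟩ := hu v hv
    exact hz v hvz
  · intro hu v hv
    exact ⟨u, hv, hu⟩

theorem stmt_4 {X : Type*} [Nonempty X] (lt : X → X → Prop) :
    (∀ A : Set X, clOp lt A = A → A ∩ ngOp lt A = clOp lt ∅) ↔ PseudoRefl lt := by
  constructor
  · intro h x ⟨y, hyx⟩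
    by_contra hno
    push_neg at hno
    have key := h (clOp lt {x}) (clOp_idem lt {x})
    have hx : x ∈ clOp lt {x} ∩ ngOp lt (clOp lt {x}) := by
      constructor
      · intro v hv; exact ⟨x, hv, rfl⟩
      · intro z hz hzA
        refine hno z hz ?_
        intro w hw
        obtain ⟨u, hwu, hu⟩ := hzA w hw
        rw [Set.mem_singleton_iff] at hu
        rwa [hu] at hwu
    rw [key] at hx
    obtain ⟨z, _, hz⟩ := hx y hyx
    exact hz
  · intro hpr A hA
    ext x
    constructor
    · rintro ⟨hxA, hxn⟩ y hyx
      exfalso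
      obtain ⟨z, hzx, hpre⟩ := hpr x ⟨y, hyx⟩
      have hzA : z ∉ A := hxn z hzx
      rw [← hA] at hzA
      have : ∃ v, lt v z ∧ ∀ w, lt v w → w ∉ A := by
        by_contra hc
        push_neg at hc
        exact hzA fun v hv => hc v hv
      obtain ⟨v, hvz, hv⟩ := this
      rw [← hA] at hxA
      obtain ⟨w, hvw, hw⟩ := hxA v (hpre v hvz)
      exact hv w hvw hw
    · intro hx
      have hno : ∀ y, ¬ lt y x := by
        intro y hy
        obtain ⟨z, _, hz⟩ := hx y hy
        exact hz
      constructor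
      · rw [← hA]; intro y hy; exact absurd hy (hno y)
      · intro y hy; exact absurd hy (hno y)
end

section
/- For any relational frame (X, ◁), the following are equivalent: (a) for every c_◁-fixpoint A, A ⊆ ¬_◁(¬_◁(A)); (b) ◁ is pseudo-symmetric, i.e., for all x ∈ X and y with y ◁ x, there exists z with z ◁ y such that z pre-refines x. -/
theorem stmt_5 {X : Type*} [Nonempty X] (lt : X → X → Prop) :
    (∀ A : Set X, clOp lt A = A → A ⊆ ngOp lt (ngOp lt A)) ↔ PseudoSymm lt := by
  constructor
  · intro h x y hyx
    set P : Set X := {v | ∀ w, lt w v → lt w x} with hP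
    have hfix : clOp lt P = P := by
      ext v
      constructor
      · intro hv w hwv
        obtain ⟨u, hwu, hu⟩ := hv w hwv
        exact hu w hwu
      · intro hv w hwv
        exact ⟨x, hv w hwv, fun w' hw' => hw'⟩
    have hx : x ∈ P := fun w hw => hw
    have := h P hfix hx y hyx
    simp only [ngOp, Set.mem_setOf_eq] at this
    push_neg at this
    obtain ⟨z, hzy, hz⟩ := this
    exact ⟨z, hzy, hz⟩
  · intro hs A hA x hx y hyx hy
    obtain ⟨z, hzy, hz⟩ := hs x y hyx
    have hzA : z ∈ A := by
      rw [← hA]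
      exact fun w hwz => ⟨x, hz w hwz, hx⟩
    exact hy z hzy hzA
end

section
/- Let L be a lattice and P a separating set of pairs of elements of L, with the relation (a,b) ◁ (c,d) iff c ≰ b, and define f(a) = {(x,y) ∈ P : x ≤ a}. Then: (i) f is a complete embedding of L into the complete lattice of c_◁-fixpoints of the relational frame (P, ◁), i.e., f is injective, each f(a) is a c_◁-fixpoint, and f preserves all meets and joins that exist in L; and (ii) if L is a complete lattice, then f is an isomorphism from L onto the lattice of c_◁-fixpoints of (P, ◁). -/
/-- The relation `(a,b) ◁ (c,d) iff c ≰ b` on a set `P` of pairs of lattice elements. -/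
def pairLt {L : Type*} [Lattice L] (P : Set (L × L)) (x y : ↥P) : Prop :=
  ¬ ((y : L × L).1 ≤ (x : L × L).2)

/-- `P` is a separating set of pairs of elements of `L`. -/
def Separating {L : Type*} [Lattice L] (P : Set (L × L)) : Prop :=
  (∀ a b : L, ¬ a ≤ b → ∃ p ∈ P, p.1 ≤ a ∧ ¬ p.1 ≤ b) ∧
  (∀ (b : L) (p : ↥P), ¬ (p : L × L).1 ≤ b →
    ∃ p' : ↥P, pairLt P p' p ∧ ∀ p'' : ↥P, pairLt P p' p'' → ¬ (p'' : L × L).1 ≤ b)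

theorem stmt_6 {L : Type*} [Lattice L] (P : Set (L × L)) (hP : Separating P)
    (f : L → Set ↥P) (hf : ∀ a : L, f a = {x : ↥P | (x : L × L).1 ≤ a}) :
    Function.Injective f ∧
    (∀ a : L, clOp (pairLt P) (f a) = f a) ∧
    (∀ (S : Set L) (a : L), IsGLB S a → f a = ⋂ b ∈ S, f b) ∧
    (∀ (S : Set L) (a : L), IsLUB S a → f a = clOp (pairLt P) (⋃ b ∈ S, f b)) ∧
    ((∀ S : Set L, ∃ a : L, IsLUB S a) →
      ∀ A : Set ↥P, clOp (pairLt P) A = A → ∃ a : L, f a = A) := by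

  obtain ⟨h1, h2⟩ := hP
  have hsub : ∀ A : Set ↥P, A ⊆ clOp (pairLt P) A := fun A x hx y hy => ⟨x, hy, hx⟩
  have hfix : ∀ a : L, clOp (pairLt P) (f a) = f a := by
    intro a
    refine Set.Subset.antisymm ?_ (hsub _)
    intro x hx
    rw [hf] at hx ⊢
    by_contra hxa
    obtain ⟨p', hlt, hall⟩ := h2 a x hxa
    obtain ⟨z, hz, hzA⟩ := hx p' hlt
    exact hall z hz hzA
  have hlub : ∀ (S : Set L) (a : L), IsLUB S a → f a = clOp (pairLt P) (⋃ b ∈ S, f b) := by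
    intro S a ha
    apply Set.Subset.antisymm
    · intro x hx y hy
      rw [hf] at hx
      have hna : ¬ a ≤ (y : L × L).2 := fun h => hy (le_trans hx h)
      have : ∃ b ∈ S, ¬ b ≤ (y : L × L).2 := by
        by_contra hc
        push_neg at hc
        exact hna (ha.2 hc)
      obtain ⟨b, hbS, hb⟩ := this
      obtain ⟨p, hpP, hp1, hp2⟩ := h1 b _ hb
      refine ⟨⟨p, hpP⟩, hp2, ?_⟩
      simp only [Set.mem_iUnion]
      exact ⟨b, hbS, by rw [hf]; exact hp1⟩
    · intro x hx
      rw [hf]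
      by_contra hxa
      obtain ⟨p', hlt, hall⟩ := h2 a x hxa
      obtain ⟨z, hz, hzU⟩ := hx p' hlt
      simp only [Set.mem_iUnion] at hzU
      obtain ⟨b, hbS, hzb⟩ := hzU
      rw [hf] at hzb
      exact hall z hz (le_trans hzb (ha.1 hbS))
  refine ⟨?_, hfix, ?_, hlub, ?_⟩
  · intro a b hab
    have key : ∀ x y : L, f x = f y → x ≤ y := by
      intro x y hxy
      by_contra hxy'
      obtain ⟨p, hpP, hp1, hp2⟩ := h1 x y hxy'
      have : (⟨p, hpP⟩ : ↥P) ∈ f x := by rw [hf]; exact hp1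
      rw [hxy, hf] at this
      exact hp2 this
    exact le_antisymm (key a b hab) (key b a hab.symm)
  · intro S a ha
    ext x
    simp only [hf, Set.mem_setOf_eq, Set.mem_iInter]
    constructor
    · intro hx b hb
      exact le_trans hx (ha.1 hb)
    · intro hx
      exact ha.2 fun b hb => hx b hb
  · intro hSup A hA
    obtain ⟨a, ha⟩ := hSup {b | ∃ x ∈ A, (x : L × L).1 = b}
    refine ⟨a, Set.Subset.antisymm ?_ ?_⟩
    · rw [hlub _ a ha]
      intro x hx
      rw [← hA]
      intro y hy
      obtain ⟨z, hz, hzU⟩ := hx y hy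
      simp only [Set.mem_iUnion] at hzU
      obtain ⟨b, hbS, hzb⟩ := hzU
      obtain ⟨x', hx'A, rfl⟩ := hbS
      rw [hf] at hzb
      exact ⟨x', fun h => hz (le_trans hzb h), hx'A⟩
    · intro x hx
      rw [hf]
      exact ha.1 ⟨x, hx, rfl⟩
end

section
/- Let (X, ◁, R, Q) be a modal frame. Then: (i) if A ⊆ X is a c_◁-fixpoint, so is □_R(A); (ii) if A ⊆ X is a c_◁-fixpoint, so is ◇_Q(A); (iii) □_R is completely multiplicative: for any family {A_i}_{i∈I} of subsets of X, □_R(⋂_{i∈I} A_i) = ⋂_{i∈I} □_R(A_i); and (iv) ◇_Q is monotone: A ⊆ B implies ◇_Q(A) ⊆ ◇_Q(B). -/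
theorem stmt_7 {X : Type*} [Nonempty X] (lt R Q : X → X → Prop)
    (hMF : IsModalFrame lt R) :
    (∀ A : Set X, clOp lt A = A → clOp lt (boxOp R A) = boxOp R A) ∧
    (∀ A : Set X, clOp lt A = A → clOp lt (diaOp lt Q A) = diaOp lt Q A) ∧
    (∀ (ι : Type*) (A : ι → Set X), boxOp R (⋂ i, A i) = ⋂ i, boxOp R (A i)) ∧
    (∀ A B : Set X, A ⊆ B → diaOp lt Q A ⊆ diaOp lt Q B) := by
  refine ⟨?_, ?_, ?_, ?_⟩
  · intro A hA
    apply Set.Subset.antisymm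
    · intro x hx y hxy
      rw [← hA]
      intro z hzy
      obtain ⟨x', hx'x, hx'⟩ := hMF x y z hxy hzy
      obtain ⟨x'', hx'x'', hx''⟩ := hx x' hx'x
      obtain ⟨y'', hRy'', hzy''⟩ := hx' x'' hx'x''
      exact ⟨y'', hzy'', hx'' y'' hRy''⟩
    · intro x hx y hylt
      exact ⟨x, hylt, hx⟩
  · intro A _
    apply Set.Subset.antisymm
    · intro x hx x' hx'x
      obtain ⟨z, hx'z, hz⟩ := hx x' hx'x
      exact hz x' hx'z
    · intro x hx y hylt
      exact ⟨x, hylt, hx⟩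
  · intro ι A
    ext x
    simp [boxOp, Set.mem_iInter]
    tauto
  · intro A B hAB x hx x' hx'x
    obtain ⟨y', y, hQ, hlt, hy⟩ := hx x' hx'x
    exact ⟨y', y, hQ, hlt, hAB hy⟩
end

section
/- Let (X, ◁, R, Q) be an additive modal frame. Then ◇_Q is completely additive on the complete lattice of c_◁-fixpoints: for any family {A_i}_{i∈I} of c_◁-fixpoints, ◇_Q(c_◁(⋃_{i∈I} A_i)) = c_◁(⋃_{i∈I} ◇_Q(A_i)), where the c_◁-closure of union is the join in the lattice of c_◁-fixpoints. -/
theorem stmt_8 {X : Type*} [Nonempty X] (lt R Q : X → X → Prop)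
    (hMF : IsModalFrame lt R) (hAdd : IsAdditiveFrame lt Q)
    {ι : Type*} (A : ι → Set X) (hA : ∀ i, clOp lt (A i) = A i) :
    diaOp lt Q (clOp lt (⋃ i, A i)) = clOp lt (⋃ i, diaOp lt Q (A i)) := by
  ext x
  constructor
  · intro hx y hyx
    obtain ⟨y', w, hQ, hy'w, hw⟩ := hx y hyx
    obtain ⟨u, hy'u, hu⟩ := hw y' hy'w
    obtain ⟨i, hui⟩ := Set.mem_iUnion.mp hu
    obtain ⟨x', hyx', hx'⟩ := hAdd y y' u hQ hy'u
    refine ⟨x', hyx', Set.mem_iUnion.mpr ⟨i, ?_⟩⟩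
    intro x'' hx''
    obtain ⟨y'', hQ'', hy''u⟩ := hx' x'' hx''
    exact ⟨y'', u, hQ'', hy''u, hui⟩
  · intro hx x' hx'x
    obtain ⟨z, hx'z, hz⟩ := hx x' hx'x
    obtain ⟨i, hzi⟩ := Set.mem_iUnion.mp hz
    obtain ⟨y', y, hQ, hy'y, hy⟩ := hzi x' hx'z
    refine ⟨y', y, hQ, hy'y, ?_⟩
    intro w hwy
    exact ⟨y, hwy, Set.mem_iUnion.mpr ⟨i, hy⟩⟩
end

section
/- Let L be a complete lattice equipped with unary operations ¬, □, ◇ where ¬ is antitone with ¬1 = 0, □ is completely multiplicative (□(⋀S) = ⋀{□a : a ∈ S} for every S ⊆ L), and ◇ is completely additive (◇(⋁S) = ⋁{◇a : a ∈ S} for every S ⊆ L). Define X = {(a,b) ∈ L × L : ¬a ≤ b}, write x₀, x₁ for the components of x ∈ X, and define: x ◁ y iff y₀ ≰ x₁; x R y iff for all a ∈ L, x₀ ≤ □a implies y₀ ≤ a; x Q y iff for all a ∈ L, ◇a ≤ x₁ implies a ≤ y₁. Then (X, ◁, R, Q) is an additive modal frame, and the map f(a) = {x ∈ X : x₀ ≤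 a} is an order isomorphism from L onto the complete lattice of c_◁-fixpoints of (X, ◁) satisfying f(¬a) = ¬_◁(f(a)), f(□a) = □_R(f(a)), and f(◇a) = ◇_Q(f(a)) for all a ∈ L. -/
/-- The set `X = {(a,b) : ¬a ≤ b}` of the representation. -/
def RepX {L : Type*} [CompleteLattice L] (neg : L → L) : Type _ :=
  {p : L × L // neg p.1 ≤ p.2}

/-- `x ◁ y` iff `y₀ ≰ x₁`. -/
def repLt {L : Type*} [CompleteLattice L] (neg : L → L) (x y : RepX neg) : Prop :=
  ¬ (y.1.1 ≤ x.1.2)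

/-- `x R y` iff for all `a`, `x₀ ≤ □a` implies `y₀ ≤ a`. -/
def repR {L : Type*} [CompleteLattice L] (neg Box : L → L) (x y : RepX neg) : Prop :=
  ∀ a : L, x.1.1 ≤ Box a → y.1.1 ≤ a

/-- `x Q y` iff for all `a`, `◇a ≤ x₁` implies `a ≤ y₁`. -/
def repQ {L : Type*} [CompleteLattice L] (neg Dia : L → L) (x y : RepX neg) : Prop :=
  ∀ a : L, Dia a ≤ x.1.2 → a ≤ y.1.2

/-- The representation map `f(a) = {x : x₀ ≤ a}`. -/
def repf {L : Type*} [CompleteLattice L] (neg : L → L) (a : L) : Set (RepX neg) :=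
  {x | x.1.1 ≤ a}
section Aux

variable {L : Type*} [CompleteLattice L] {neg Box Dia : L → L}

lemma box_mono (hBox : ∀ S : Set L, Box (sInf S) = sInf (Box '' S))
    {a b : L} (h : a ≤ b) : Box a ≤ Box b := by
  have : Box (sInf {a, b}) = sInf (Box '' {a, b}) := hBox _
  rw [sInf_pair, inf_eq_left.2 h] at this
  rw [this]
  exact sInf_le ⟨b, by simp⟩

lemma dia_mono (hDia : ∀ S : Set L, Dia (sSup S) = sSup (Dia '' S))
    {a b : L} (h : a ≤ b) : Dia a ≤ Dia b := by
  have : Dia (sSup {a, b}) = sSup (Dia '' {a, b}) := hDia _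
  rw [sSup_pair, sup_eq_right.2 h] at this
  rw [this]
  exact le_sSup ⟨a, by simp⟩

/-- element (⊤, b) of RepX -/
def topEl (hneg1 : neg ⊤ = ⊥) (b : L) : RepX neg :=
  ⟨(⊤, b), by simp [hneg1]⟩

/-- element (a, neg a) of RepX -/
def diagEl (neg : L → L) (a : L) : RepX neg := ⟨(a, neg a), le_rfl⟩

lemma le_box_inf (hBox : ∀ S : Set L, Box (sInf S) = sInf (Box '' S))
    (t : L) : t ≤ Box (sInf {c : L | t ≤ Box c}) := by
  rw [hBox]
  exact le_sInf (by rintro _ ⟨c, hc, rfl⟩; exact hc)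

lemma dia_sup_le (hDia : ∀ S : Set L, Dia (sSup S) = sSup (Dia '' S))
    (t : L) : Dia (sSup {c : L | Dia c ≤ t}) ≤ t := by
  rw [hDia]
  exact sSup_le (by rintro _ ⟨c, hc, rfl⟩; exact hc)

end Aux

theorem stmt_9 {L : Type*} [CompleteLattice L] (neg Box Dia : L → L)
    (hneg : ∀ a b : L, a ≤ b → neg b ≤ neg a) (hneg1 : neg ⊤ = ⊥)
    (hBox : ∀ S : Set L, Box (sInf S) = sInf (Box '' S))
    (hDia : ∀ S : Set L, Dia (sSup S) = sSup (Dia '' S)) :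
    IsModalFrame (repLt neg) (repR neg Box) ∧
    IsAdditiveFrame (repLt neg) (repQ neg Dia) ∧
    (∀ a b : L, a ≤ b ↔ repf neg a ⊆ repf neg b) ∧
    (∀ a : L, clOp (repLt neg) (repf neg a) = repf neg a) ∧
    (∀ A : Set (RepX neg), clOp (repLt neg) A = A → ∃ a : L, repf neg a = A) ∧
    (∀ a : L, repf neg (neg a) = ngOp (repLt neg) (repf neg a)) ∧
    (∀ a : L, repf neg (Box a) = boxOp (repR neg Box) (repf neg a)) ∧
    (∀ a : L, repf neg (Dia a) = diaOp (repLt neg) (repQ neg Dia) (repf neg a)) := by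
  refine ⟨?_, ?_, ?_, ?_, ?_, ?_, ?_, ?_⟩
  · -- IsModalFrame
    intro x y z hR hlt
    refine ⟨topEl hneg1 (Box z.1.2), ?_, ?_⟩
    · intro h
      exact hlt (hR _ h)
    · intro x'' h
      refine ⟨diagEl neg (sInf {c : L | x''.1.1 ≤ Box c}), ?_, ?_⟩
      · intro a ha
        exact sInf_le ha
      · intro hle
        exact h (le_trans (le_box_inf hBox _) (box_mono hBox hle))
  · -- IsAdditiveFrame
    intro x y z hQ hlt
    refine ⟨diagEl neg (Dia z.1.1), ?_, ?_⟩
    · intro h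
      exact hlt (hQ _ h)
    · intro x'' h
      refine ⟨topEl hneg1 (sSup {c : L | Dia c ≤ x''.1.2}), ?_, ?_⟩
      · intro a ha
        exact le_sSup ha
      · intro hle
        exact h (le_trans (dia_mono hDia hle) (dia_sup_le hDia _))
  · -- order embedding
    intro a b
    constructor
    · intro h x hx
      exact le_trans hx h
    · intro h
      exact h (show diagEl neg a ∈ repf neg a from le_rfl)
  · -- fixpoint
    intro a
    apply Set.Subset.antisymm
    · intro x hx
      by_contra hxa
      obtain ⟨z, hz, hza⟩ := hx (topEl hneg1 a) hxa
      exact hz hza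
    · intro x hx y _
      exact ⟨x, ‹_›, hx⟩
  · -- surjectivity
    intro A hA
    refine ⟨sSup {b : L | ∃ z ∈ A, z.1.1 = b}, ?_⟩
    apply Set.Subset.antisymm
    · intro x hx
      rw [← hA]
      intro y hy
      by_contra hne
      push_neg at hne
      have : sSup {b : L | ∃ z ∈ A, z.1.1 = b} ≤ y.1.2 := by
        apply sSup_le
        rintro _ ⟨z, hz, rfl⟩
        by_contra h
        exact hne z h hz
      exact hy (le_trans hx this)
    · intro x hx
      exact le_sSup ⟨x, hx, rfl⟩
  · -- negation
    intro a
    ext x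
    constructor
    · intro hx y hy hya
      exact hy (le_trans (le_trans hx (hneg _ _ hya)) y.2)
    · intro hx
      have := hx (diagEl neg a)
      by_contra h
      exact this h le_rfl
  · -- box
    intro a
    ext x
    constructor
    · intro hx y hy
      exact hy a hx
    · intro hx
      have h1 : (diagEl neg (sInf {c : L | x.1.1 ≤ Box c})).1.1 ≤ a :=
        hx _ (fun c hc => sInf_le hc)
      exact le_trans (le_box_inf hBox _) (box_mono hBox h1)
  · -- diamond
    intro a
    ext x
    constructor
    · intro hx x' hx'
      refine ⟨topEl hneg1 (sSup {c : L | Dia c ≤ x'.1.2}), diagEl neg a, ?_, ?_, le_rfl⟩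
      · intro c hc
        exact le_sSup hc
      · intro hle
        exact hx' (le_trans hx (le_trans (dia_mono hDia hle) (dia_sup_le hDia _)))
    · intro hx
      by_contra h
      obtain ⟨y', y, hQ, hlt, hy⟩ := hx (topEl hneg1 (Dia a)) h
      exact hlt (le_trans hy (hQ a le_rfl))
end

section
/- Let (X, ◁, R, Q) be a modal frame in which Q ⊆ R (as binary relations). Then for every c_◁-fixpoint A ⊆ X, ◇_Q(¬_◁(A)) ⊆ ¬_◁(□_R(A)). -/
theorem stmt_15 {X : Type*} [Nonempty X] (lt R Q : X → X → Prop)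
    (hMF : IsModalFrame lt R) (hQR : ∀ x y, Q x y → R x y)
    (A : Set X) (hA : clOp lt A = A) :
    diaOp lt Q (ngOp lt A) ⊆ ngOp lt (boxOp R A) := by
  intro x hx y hyx hbox
  obtain ⟨y', y'', hQ, hlt, hng⟩ := hx y hyx
  exact hng y' hlt (hbox y' (hQR y y' hQ))
end

section
/- Let (X, ◁, R, Q) be a negative modal frame. Then for every c_◁-fixpoint A ⊆ X, ¬_◁(◇_Q(A)) ⊆ □_R(¬_◁(A)). -/
theorem stmt_16 {X : Type*} [Nonempty X] (lt R Q : X → X → Prop)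
    (hMF : IsModalFrame lt R) (hNeg : IsNegativeFrame lt R Q)
    (A : Set X) (hA : clOp lt A = A) :
    ngOp lt (diaOp lt Q A) ⊆ boxOp R (ngOp lt A) := by
  intro x hx y hxy z hzy hzA
  obtain ⟨x', hx'x, hx'⟩ := hNeg x y z hxy hzy
  have hnd := hx x' hx'x
  simp only [diaOp, Set.mem_setOf_eq, not_forall] at hnd
  obtain ⟨x'', hx''x', hno⟩ := hnd
  obtain ⟨y'', hQ, hy''z⟩ := hx' x'' hx''x'
  exact hno ⟨y'', z, hQ, hy''z, hzA⟩
end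

section
/- Let L be a complete lattice equipped with unary operations ¬, □, ◇ where ¬ is dually self-adjoint (a ≤ ¬b implies b ≤ ¬a) with ¬1 = 0, □ is completely multiplicative (□(⋀S) = ⋀{□a : a ∈ S} for every S ⊆ L), ◇ is completely additive (◇(⋁S) = ⋁{◇a : a ∈ S} for every S ⊆ L), and ◇¬a ≤ ¬□a for all a ∈ L. Define X = {(a,b) ∈ L × L : ¬a ≤ b}, write x₀, x₁ for the components of x ∈ X, and define: x ◁ y iff y₀ ≰ x₁; x R y iff for all a ∈ L, (x₀ ≤ □a implies y₀ ≤ a) and (◇a ≤ x₁ implies a ≤ y₁); and Q = R. Then: (i) (X, ◁, R, Q) is a unified (R = Q) additive modal frame with ◁ pseudo-symmetric; (ii) the map f(a) = {x ∈ X : x₀ ≤ a} is an order isomorphism from L onto the complete lattice of c_◁-fixpoints of (X, ◁) satisfying f(¬a) = ¬_◁(f(a)), f(□a) = □_R(f(a)), and f(◇a) = ◇_Q(f(a)); (iii) if a ∧ ¬a = 0 for all a ∈ L, then ◁ is pseudo-reflexive; (iv) if ¬◇a ≤ □¬a for all a ∈ L, then the frame is negative. -/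
/-- The unified relation: `x R y` iff for all `a`,
`x₀ ≤ □a` implies `y₀ ≤ a`, and `◇a ≤ x₁` implies `a ≤ y₁`. -/
def repR2 {L : Type*} [CompleteLattice L] (neg Box Dia : L → L) (x y : RepX neg) : Prop :=
  ∀ a : L, (x.1.1 ≤ Box a → y.1.1 ≤ a) ∧ (Dia a ≤ x.1.2 → a ≤ y.1.2)

theorem stmt_17 {L : Type*} [CompleteLattice L] (neg Box Dia : L → L)
    (hdsa : ∀ a b : L, a ≤ neg b → b ≤ neg a) (hneg1 : neg ⊤ = ⊥)
    (hBox : ∀ S : Set L, Box (sInf S) = sInf (Box '' S))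
    (hDia : ∀ S : Set L, Dia (sSup S) = sSup (Dia '' S))
    (hInt : ∀ a : L, Dia (neg a) ≤ neg (Box a))
    (R Q : RepX neg → RepX neg → Prop)
    (hR : R = repR2 neg Box Dia) (hQ : Q = R) :
    (IsModalFrame (repLt neg) R ∧ IsAdditiveFrame (repLt neg) Q ∧ Q = R ∧
      PseudoSymm (repLt neg)) ∧
    ((∀ a b : L, a ≤ b ↔ repf neg a ⊆ repf neg b) ∧
     (∀ a : L, clOp (repLt neg) (repf neg a) = repf neg a) ∧
     (∀ A : Set (RepX neg), clOp (repLt neg) A = A → ∃ a : L, repf neg a = A) ∧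
     (∀ a : L, repf neg (neg a) = ngOp (repLt neg) (repf neg a)) ∧
     (∀ a : L, repf neg (Box a) = boxOp R (repf neg a)) ∧
     (∀ a : L, repf neg (Dia a) = diaOp (repLt neg) Q (repf neg a))) ∧
    ((∀ a : L, a ⊓ neg a = ⊥) → PseudoRefl (repLt neg)) ∧
    ((∀ a : L, neg (Dia a) ≤ Box (neg a)) → IsNegativeFrame (repLt neg) R Q) := by

  subst hR
  subst hQ
  have nanti : ∀ a b : L, a ≤ b → neg b ≤ neg a := fun a b h =>
    hdsa _ _ (h.trans (hdsa _ _ le_rfl))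
  have boxMono : ∀ a b : L, a ≤ b → Box a ≤ Box b := by
    intro a b h
    have h2 := hBox {a, b}
    rw [Set.image_pair, sInf_pair, sInf_pair, inf_eq_left.mpr h] at h2
    exact h2.le.trans inf_le_right
  have diaMono : ∀ a b : L, a ≤ b → Dia a ≤ Dia b := by
    intro a b h
    have h2 := hDia {a, b}
    rw [Set.image_pair, sSup_pair, sSup_pair, sup_eq_right.mpr h] at h2
    exact le_sup_left.trans h2.ge
  have hxb : ∀ x : RepX neg, x.1.1 ≤ Box (sInf {a | x.1.1 ≤ Box a}) := by
    intro x
    rw [hBox]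
    exact le_sInf (by rintro _ ⟨a, ha, rfl⟩; exact ha)
  have hdc : ∀ x : RepX neg, Dia (sSup {a | Dia a ≤ x.1.2}) ≤ x.1.2 := by
    intro x
    rw [hDia]
    exact sSup_le (by rintro _ ⟨a, ha, rfl⟩; exact ha)
  have hsucc : ∀ x : RepX neg, neg (sInf {a | x.1.1 ≤ Box a}) ≤ sSup {a | Dia a ≤ x.1.2} := by
    intro x
    refine le_sSup ?_
    show Dia _ ≤ _
    exact (hInt _).trans ((nanti _ _ (hxb x)).trans x.2)
  have succ : ∀ x : RepX neg, ∃ y : RepX neg,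
      repR2 neg Box Dia x y ∧
      (∀ a, y.1.1 ≤ a → x.1.1 ≤ Box a) ∧ (∀ a, a ≤ y.1.2 → Dia a ≤ x.1.2) := by
    intro x
    refine ⟨⟨(sInf {a | x.1.1 ≤ Box a}, sSup {a | Dia a ≤ x.1.2}), hsucc x⟩,
      fun a => ⟨fun h => sInf_le h, fun h => le_sSup h⟩, ?_, ?_⟩
    · intro a ha
      exact (hxb x).trans (boxMono _ _ ha)
    · intro a ha
      exact (diaMono _ _ ha).trans (hdc x)
  refine ⟨⟨?_, ?_, rfl, ?_⟩, ⟨?_, ?_, ?_, ?_, ?_, ?_⟩, ?_, ?_⟩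
  · -- IsModalFrame
    intro x y z hxy hzy
    refine ⟨⟨(⊤, Box z.1.2), by rw [hneg1]; exact bot_le⟩, ?_, ?_⟩
    · intro h
      exact hzy ((hxy z.1.2).1 h)
    · intro x'' hx''
      obtain ⟨y'', hR'', hb, _⟩ := succ x''
      exact ⟨y'', hR'', fun h => hx'' (hb _ h)⟩
  · -- IsAdditiveFrame
    intro x y z hxy hyz
    refine ⟨⟨(Dia z.1.1, neg (Dia z.1.1)), le_rfl⟩, ?_, ?_⟩
    · intro h
      exact hyz ((hxy z.1.1).2 h)
    · intro x'' hx''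
      obtain ⟨y'', hR'', _, hc⟩ := succ x''
      exact ⟨y'', hR'', fun h => hx'' (hc _ h)⟩
  · -- PseudoSymm
    intro x y hyx
    refine ⟨⟨(x.1.1, neg x.1.1), le_rfl⟩, ?_, fun w hw => hw⟩
    intro h
    exact hyx ((hdsa _ _ h).trans y.2)
  · -- order embedding
    intro a b
    constructor
    · intro h x hx
      exact le_trans hx h
    · intro h
      exact h (show (⟨(a, neg a), le_rfl⟩ : RepX neg) ∈ repf neg a from le_rfl)
  · -- clOp fixpoint
    intro a
    ext x
    constructor
    · intro hx
      by_contra hxa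
      obtain ⟨z, hz1, hz2⟩ := hx ⟨(⊤, a), by rw [hneg1]; exact bot_le⟩ hxa
      exact hz1 hz2
    · intro hx y hy
      refine ⟨⟨(a, neg a), le_rfl⟩, ?_, le_rfl⟩
      intro h
      exact hy (hx.trans h)
  · -- surjectivity
    intro A hA
    refine ⟨sSup ((fun x : RepX neg => x.1.1) '' A), ?_⟩
    ext x
    constructor
    · intro hx
      rw [← hA]
      intro y hy
      by_contra hcon
      push_neg at hcon
      have hle : sSup ((fun x : RepX neg => x.1.1) '' A) ≤ y.1.2 := by
        apply sSup_le
        rintro _ ⟨z, hz, rfl⟩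
        by_contra hzz
        exact hcon z hzz hz
      exact hy (le_trans hx hle)
    · intro hx
      exact le_sSup ⟨x, hx, rfl⟩
  · -- neg
    intro a
    ext x
    constructor
    · intro hx y hy hymem
      exact hy (hx.trans ((nanti _ _ hymem).trans y.2))
    · intro hx
      by_contra hxa
      exact hx ⟨(a, neg a), le_rfl⟩ hxa le_rfl
  · -- Box
    intro a
    ext x
    constructor
    · intro hx y hy
      exact (hy a).1 hx
    · intro hx
      obtain ⟨y, hR', hb, _⟩ := succ x
      exact hb a (hx y hR')
  · -- Dia
    intro a
    ext x
    constructor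
    · intro hx x' hx'
      obtain ⟨y', hR', _, hc⟩ := succ x'
      refine ⟨y', ⟨(a, neg a), le_rfl⟩, hR', ?_, le_rfl⟩
      intro h
      exact hx' (hx.trans (hc a h))
    · intro hx
      by_contra hxd
      obtain ⟨y', y, hQ', hlt, hy⟩ := hx ⟨(⊤, Dia a), by rw [hneg1]; exact bot_le⟩ hxd
      exact hlt (hy.trans ((hQ' a).2 le_rfl))
  · -- PseudoRefl
    intro hcomp x hex
    obtain ⟨y, hy⟩ := hex
    refine ⟨⟨(x.1.1, neg x.1.1), le_rfl⟩, ?_, fun w hw => hw⟩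
    intro h
    have hb : x.1.1 = ⊥ := le_bot_iff.mp (by rw [← hcomp x.1.1]; exact le_inf le_rfl h)
    exact hy (by rw [hb]; exact bot_le)
  · -- Negative
    intro hng x y z hxy hzy
    refine ⟨⟨(Dia z.1.1, neg (Dia z.1.1)), le_rfl⟩, ?_, ?_⟩
    · intro h
      exact hzy (((hxy (neg z.1.1)).1 (h.trans (hng z.1.1))).trans z.2)
    · intro x'' hx''
      obtain ⟨y'', hR'', _, hc⟩ := succ x''
      exact ⟨y'', hR'', fun h => hx'' (hc _ h)⟩
end

section
/- Let L be a bounded lattice equipped with unary operations ¬, □, ◇ where ¬ is dually self-adjoint (a ≤ ¬b implies b ≤ ¬a) with ¬1 = 0, □ is multiplicative (□(a ∧ b) = □a ∧ □b and □1 = 1), ◇ is additive (◇(a ∨ b) = ◇a ∨ ◇b and ◇0 = 0), and ◇¬a ≤ ¬□a for all a ∈ L. Define X = {(F, I) : F is a filter in L, I is an ideal in L, and {¬a : a ∈ F} ⊆ I}, with (F,I) ◁ (F',I') iff I ∩ F' = ∅; (F,I) R (F',I') iff for all a ∈ L, (□a ∈ F implies a ∈ F') and (◇a ∈ I implies a ∈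 I'); and Q = R. Then: (i) (X, ◁, R, Q) is a unified (R = Q) additive modal frame with ◁ pseudo-symmetric; (ii) the map a ↦ â = {(F,I) ∈ X : a ∈ F} is an injective bounded-lattice homomorphism into the complete lattice of c_◁-fixpoints of (X, ◁) satisfying (¬a)^ = ¬_◁(â), (□a)^ = □_R(â), and (◇a)^ = ◇_Q(â), and its image is exactly the set of c_◁-fixpoints that are compact open in the topology on X generated by {â : a ∈ L}; (iii) if a ∧ ¬a = 0 for all a ∈ L, then ◁ is pseudo-reflexive; (iv) if ¬◇a ≤ □¬a for all a ∈ L, then the frame is negative. -/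
/-- A filter in a bounded lattice: nonempty, upward closed, closed under binary meets. -/
def IsFilt {L : Type*} [Lattice L] [BoundedOrder L] (F : Set L) : Prop :=
  F.Nonempty ∧ (∀ a b : L, a ∈ F → a ≤ b → b ∈ F) ∧ (∀ a b : L, a ∈ F → b ∈ F → a ⊓ b ∈ F)

/-- An ideal in a bounded lattice: nonempty, downward closed, closed under binary joins. -/
def IsIdl {L : Type*} [Lattice L] [BoundedOrder L] (I : Set L) : Prop :=
  I.Nonempty ∧ (∀ a b : L, a ∈ I → b ≤ a → b ∈ I) ∧ (∀ a b : L, a ∈ I → b ∈ I → a ⊔ b ∈ I)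

/-- The set of filter-ideal pairs `(F,I)` with `{¬a : a ∈ F} ⊆ I`. -/
def FIX {L : Type*} [Lattice L] [BoundedOrder L] (neg : L → L) : Type _ :=
  {p : Set L × Set L // IsFilt p.1 ∧ IsIdl p.2 ∧ ∀ a ∈ p.1, neg a ∈ p.2}

/-- `(F,I) ◁ (F',I')` iff `I ∩ F' = ∅`. -/
def fiLt {L : Type*} [Lattice L] [BoundedOrder L] (neg : L → L) (x y : FIX neg) : Prop :=
  x.1.2 ∩ y.1.1 = ∅

/-- The map `a ↦ â = {(F,I) : a ∈ F}`. -/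
def fhat {L : Type*} [Lattice L] [BoundedOrder L] (neg : L → L) (a : L) : Set (FIX neg) :=
  {x | a ∈ x.1.1}

/-- The unified relation: `(F,I) R (F',I')` iff for all `a`,
`□a ∈ F` implies `a ∈ F'`, and `◇a ∈ I` implies `a ∈ I'`. -/
def fiR2 {L : Type*} [Lattice L] [BoundedOrder L] (neg Box Dia : L → L)
    (x y : FIX neg) : Prop :=
  ∀ a : L, (Box a ∈ x.1.1 → a ∈ y.1.1) ∧ (Dia a ∈ x.1.2 → a ∈ y.1.2)

section Stmt18Aux

variable {L : Type*} [Lattice L] [BoundedOrder L] {neg Box Dia : L → L}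

theorem aux_subset_clOp {X : Type*} {lt : X → X → Prop} (A : Set X) : A ⊆ clOp lt A :=
  fun x hx y hy => ⟨x, hy, hx⟩

theorem aux_clOp_mono {X : Type*} {lt : X → X → Prop} {A B : Set X} (h : A ⊆ B) :
    clOp lt A ⊆ clOp lt B := fun x hx y hy =>
  let ⟨z, h1, h2⟩ := hx y hy; ⟨z, h1, h h2⟩

theorem aux_filt (x : FIX neg) : IsFilt x.1.1 := x.2.1
theorem aux_idl (x : FIX neg) : IsIdl x.1.2 := x.2.2.1
theorem aux_ncond (x : FIX neg) : ∀ a ∈ x.1.1, neg a ∈ x.1.2 := x.2.2.2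

theorem aux_top_mem {F : Set L} (h : IsFilt F) : ⊤ ∈ F := by
  obtain ⟨⟨a, ha⟩, hup, -⟩ := h; exact hup a ⊤ ha le_top

theorem aux_bot_mem {I : Set L} (h : IsIdl I) : ⊥ ∈ I := by
  obtain ⟨⟨a, ha⟩, hdn, -⟩ := h; exact hdn a ⊥ ha bot_le

theorem aux_fiLt_iff (x y : FIX neg) : fiLt neg x y ↔ ∀ c ∈ x.1.2, c ∉ y.1.1 := by
  unfold fiLt
  rw [Set.eq_empty_iff_forall_notMem]
  simp [Set.mem_inter_iff, not_and]

theorem aux_neg_antitone (hdsa : ∀ a b : L, a ≤ neg b → b ≤ neg a) {a b : L} (hab : a ≤ b) :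
    neg b ≤ neg a :=
  hdsa a (neg b) (hab.trans (hdsa (neg b) b le_rfl))

/-- The principal pair `(↑a, ↓b)` for `¬a ≤ b`. -/
def ppair (hdsa : ∀ a b : L, a ≤ neg b → b ≤ neg a) (a b : L) (h : neg a ≤ b) : FIX neg :=
  ⟨(Set.Ici a, Set.Iic b),
   ⟨⟨a, le_rfl⟩, fun _ _ h1 h2 => le_trans h1 h2, fun _ _ h1 h2 => le_inf h1 h2⟩,
   ⟨⟨b, le_rfl⟩, fun _ _ h1 h2 => le_trans h2 h1, fun _ _ h1 h2 => sup_le h1 h2⟩,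
   fun c hc => le_trans (aux_neg_antitone hdsa hc) h⟩

theorem aux_lt_ppair {hdsa : ∀ a b : L, a ≤ neg b → b ≤ neg a} {y : FIX neg} {a b : L}
    {hab : neg a ≤ b} : fiLt neg y (ppair hdsa a b hab) ↔ a ∉ y.1.2 := by
  rw [aux_fiLt_iff]
  constructor
  · intro h ha; exact h a ha le_rfl
  · intro ha c hc hc'; exact ha ((aux_idl y).2.1 c a hc hc')

theorem aux_ppair_lt {hdsa : ∀ a b : L, a ≤ neg b → b ≤ neg a} {y : FIX neg} {a b : L}
    {hab : neg a ≤ b} : fiLt neg (ppair hdsa a b hab) y ↔ b ∉ y.1.1 := by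
  rw [aux_fiLt_iff]
  constructor
  · intro h hb; exact h b le_rfl hb
  · intro hb c hc hc'; exact hb ((aux_filt y).2.1 c b hc' hc)

theorem aux_fhat_mono {a b : L} (h : a ≤ b) : fhat neg a ⊆ fhat neg b :=
  fun x hx => (aux_filt x).2.1 a b hx h

theorem aux_fhat_inf (a b : L) : fhat neg (a ⊓ b) = fhat neg a ∩ fhat neg b := by
  ext x
  constructor
  · intro h
    exact ⟨(aux_filt x).2.1 _ _ h inf_le_left, (aux_filt x).2.1 _ _ h inf_le_right⟩
  · intro ⟨h1, h2⟩; exact (aux_filt x).2.2 a b h1 h2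

theorem aux_fhat_top : fhat neg (⊤ : L) = (Set.univ : Set (FIX neg)) :=
  Set.eq_univ_of_forall fun x => aux_top_mem (aux_filt x)

theorem aux_box_mono (hBoxMul : ∀ a b : L, Box (a ⊓ b) = Box a ⊓ Box b) {a b : L}
    (h : a ≤ b) : Box a ≤ Box b := by
  calc Box a = Box (a ⊓ b) := by rw [inf_eq_left.2 h]
  _ = Box a ⊓ Box b := hBoxMul a b
  _ ≤ Box b := inf_le_right

theorem aux_dia_mono (hDiaAdd : ∀ a b : L, Dia (a ⊔ b) = Dia a ⊔ Dia b) {a b : L}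
    (h : a ≤ b) : Dia a ≤ Dia b := by
  calc Dia a ≤ Dia a ⊔ Dia b := le_sup_left
  _ = Dia (a ⊔ b) := (hDiaAdd a b).symm
  _ = Dia b := by rw [sup_eq_right.2 h]

/-- The canonical `R`-successor `({b | □b ∈ F}, {b | ◇b ∈ I})`. -/
def rSucc (hBoxMul : ∀ a b : L, Box (a ⊓ b) = Box a ⊓ Box b) (hBoxTop : Box ⊤ = ⊤)
    (hDiaAdd : ∀ a b : L, Dia (a ⊔ b) = Dia a ⊔ Dia b) (hDiaBot : Dia ⊥ = ⊥)
    (hInt : ∀ a : L, Dia (neg a) ≤ neg (Box a)) (x : FIX neg) : FIX neg :=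
  ⟨({b | Box b ∈ x.1.1}, {b | Dia b ∈ x.1.2}),
   ⟨⟨⊤, show Box ⊤ ∈ x.1.1 by rw [hBoxTop]; exact aux_top_mem (aux_filt x)⟩,
    fun a b ha hab => (aux_filt x).2.1 _ _ ha (aux_box_mono hBoxMul hab),
    fun a b ha hb => show Box (a ⊓ b) ∈ x.1.1 by
      rw [hBoxMul]; exact (aux_filt x).2.2 _ _ ha hb⟩,
   ⟨⟨⊥, show Dia ⊥ ∈ x.1.2 by rw [hDiaBot]; exact aux_bot_mem (aux_idl x)⟩,
    fun a b ha hba => (aux_idl x).2.1 _ _ ha (aux_dia_mono hDiaAdd hba),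
    fun a b ha hb => show Dia (a ⊔ b) ∈ x.1.2 by
      rw [hDiaAdd]; exact (aux_idl x).2.2 _ _ ha hb⟩,
   fun a ha => (aux_idl x).2.1 _ _ (aux_ncond x (Box a) ha) (hInt a)⟩

theorem aux_rSucc_R (hBoxMul : ∀ a b : L, Box (a ⊓ b) = Box a ⊓ Box b) (hBoxTop : Box ⊤ = ⊤)
    (hDiaAdd : ∀ a b : L, Dia (a ⊔ b) = Dia a ⊔ Dia b) (hDiaBot : Dia ⊥ = ⊥)
    (hInt : ∀ a : L, Dia (neg a) ≤ neg (Box a)) (x : FIX neg) :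
    fiR2 neg Box Dia x (rSucc hBoxMul hBoxTop hDiaAdd hDiaBot hInt x) :=
  fun _ => ⟨id, id⟩

/-- The ideal generated by the negations of a filter, paired with that filter. -/
def npair (hdsa : ∀ a b : L, a ≤ neg b → b ≤ neg a) (F : Set L) (hF : IsFilt F) : FIX neg :=
  ⟨(F, {d | ∃ c ∈ F, d ≤ neg c}),
   hF,
   ⟨⟨neg ⊤, ⊤, aux_top_mem hF, le_rfl⟩,
    fun a b ⟨c, hc, hac⟩ hba => ⟨c, hc, hba.trans hac⟩,
    fun a b ⟨c, hc, hac⟩ ⟨c', hc', hbc'⟩ =>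
      ⟨c ⊓ c', hF.2.2 c c' hc hc',
       sup_le (hac.trans (aux_neg_antitone hdsa inf_le_left))
         (hbc'.trans (aux_neg_antitone hdsa inf_le_right))⟩⟩,
   fun a ha => ⟨a, ha, le_rfl⟩⟩

end Stmt18Aux
section Stmt18Aux2

variable {L : Type*} [Lattice L] [BoundedOrder L] {neg Box Dia : L → L}
variable (hdsa : ∀ a b : L, a ≤ neg b → b ≤ neg a) (hneg1 : neg ⊤ = ⊥)
variable (hBoxMul : ∀ a b : L, Box (a ⊓ b) = Box a ⊓ Box b) (hBoxTop : Box ⊤ = ⊤)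
variable (hDiaAdd : ∀ a b : L, Dia (a ⊔ b) = Dia a ⊔ Dia b) (hDiaBot : Dia ⊥ = ⊥)
variable (hInt : ∀ a : L, Dia (neg a) ≤ neg (Box a))

include hdsa in
theorem aux_fhat_inj : Function.Injective (fhat (L := L) neg) := by
  intro a b h
  have h1 : ppair hdsa a (neg a) le_rfl ∈ fhat neg a := le_rfl
  have h2 : ppair hdsa b (neg b) le_rfl ∈ fhat neg b := le_rfl
  rw [h] at h1
  rw [← h] at h2
  exact le_antisymm h1 h2

include hdsa hneg1 in
theorem aux_clOp_fhat (a : L) : clOp (fiLt neg) (fhat neg a) = fhat neg a := by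
  refine subset_antisymm ?_ (aux_subset_clOp _)
  intro x hx
  by_contra hax
  have hlt : fiLt neg (ppair hdsa ⊤ a (by rw [hneg1]; exact bot_le)) x :=
    aux_ppair_lt.2 hax
  obtain ⟨z, hyz, hz⟩ := hx _ hlt
  exact (aux_fiLt_iff _ _).1 hyz a le_rfl hz

include hdsa hneg1 in
theorem aux_fhat_sup (a b : L) :
    fhat neg (a ⊔ b) = clOp (fiLt neg) (fhat neg a ∪ fhat neg b) := by
  apply subset_antisymm
  · intro x hx y hy
    have hns : a ⊔ b ∉ y.1.2 := fun h => (aux_fiLt_iff _ _).1 hy _ h hx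
    by_cases ha : a ∈ y.1.2
    · have hb : b ∉ y.1.2 := fun hb => hns ((aux_idl y).2.2 a b ha hb)
      exact ⟨ppair hdsa b (neg b) le_rfl, aux_lt_ppair.2 hb, Or.inr le_rfl⟩
    · exact ⟨ppair hdsa a (neg a) le_rfl, aux_lt_ppair.2 ha, Or.inl le_rfl⟩
  · intro x hx
    by_contra hax
    have hlt : fiLt neg (ppair hdsa ⊤ (a ⊔ b) (by rw [hneg1]; exact bot_le)) x :=
      aux_ppair_lt.2 hax
    obtain ⟨z, hyz, hz⟩ := hx _ hlt
    rcases hz with hz | hz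
    · exact (aux_fiLt_iff _ _).1 hyz a le_sup_left hz
    · exact (aux_fiLt_iff _ _).1 hyz b le_sup_right hz

include hdsa hneg1 in
theorem aux_fhat_bot : fhat neg (⊥ : L) = clOp (fiLt neg) (∅ : Set (FIX neg)) := by
  apply subset_antisymm
  · intro x hx y hy
    exact absurd hx ((aux_fiLt_iff _ _).1 hy ⊥ (aux_bot_mem (aux_idl y)))
  · intro x hx
    by_contra hax
    have hlt : fiLt neg (ppair hdsa ⊤ ⊥ (by rw [hneg1]) ) x := aux_ppair_lt.2 hax
    obtain ⟨z, -, hz⟩ := hx _ hlt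
    exact hz

include hdsa in
theorem aux_fhat_neg (a : L) : fhat neg (neg a) = ngOp (fiLt neg) (fhat neg a) := by
  apply subset_antisymm
  · intro x hx y hy hmem
    exact (aux_fiLt_iff _ _).1 hy (neg a) (aux_ncond y a hmem) hx
  · intro x hx
    by_contra hax
    have hlt : fiLt neg (ppair hdsa a (neg a) le_rfl) x := by
      rw [aux_fiLt_iff]
      intro c hc hc'
      exact hax ((aux_filt x).2.1 c (neg a) hc' hc)
    exact hx _ hlt le_rfl

include hBoxMul hBoxTop hDiaAdd hDiaBot hInt in
theorem aux_fhat_box (a : L) :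
    fhat neg (Box a) = boxOp (fiR2 neg Box Dia) (fhat neg a) := by
  apply subset_antisymm
  · intro x hx y hy
    exact (hy a).1 hx
  · intro x hx
    exact hx _ (aux_rSucc_R hBoxMul hBoxTop hDiaAdd hDiaBot hInt x)

include hdsa hneg1 hBoxMul hBoxTop hDiaAdd hDiaBot hInt in
theorem aux_fhat_dia (a : L) :
    fhat neg (Dia a) = diaOp (fiLt neg) (fiR2 neg Box Dia) (fhat neg a) := by
  apply subset_antisymm
  · intro x hx x' hx'
    refine ⟨rSucc hBoxMul hBoxTop hDiaAdd hDiaBot hInt x',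
      ppair hdsa a (neg a) le_rfl,
      aux_rSucc_R hBoxMul hBoxTop hDiaAdd hDiaBot hInt x', ?_, le_rfl⟩
    exact aux_lt_ppair.2 (fun h => (aux_fiLt_iff _ _).1 hx' (Dia a) h hx)
  · intro x hx
    by_contra hax
    have hlt : fiLt neg (ppair hdsa ⊤ (Dia a) (by rw [hneg1]; exact bot_le)) x :=
      aux_ppair_lt.2 hax
    obtain ⟨y', y, hQ, hlt', hy⟩ := hx _ hlt
    have ha : a ∈ y'.1.2 := (hQ a).2 le_rfl
    exact (aux_fiLt_iff _ _).1 hlt' a ha hy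

end Stmt18Aux2
section Stmt18Aux3

variable {L : Type*} [Lattice L] [BoundedOrder L] {neg Box Dia : L → L}
variable (hdsa : ∀ a b : L, a ≤ neg b → b ≤ neg a) (hneg1 : neg ⊤ = ⊥)
variable (hBoxMul : ∀ a b : L, Box (a ⊓ b) = Box a ⊓ Box b) (hBoxTop : Box ⊤ = ⊤)
variable (hDiaAdd : ∀ a b : L, Dia (a ⊔ b) = Dia a ⊔ Dia b) (hDiaBot : Dia ⊥ = ⊥)
variable (hInt : ∀ a : L, Dia (neg a) ≤ neg (Box a))

include hdsa in
theorem aux_pseudoSymm : PseudoSymm (fiLt (L := L) neg) := by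
  intro x y hyx
  refine ⟨npair hdsa x.1.1 (aux_filt x), ?_, fun w hw => hw⟩
  rw [aux_fiLt_iff]
  rintro d ⟨c, hc, hdc⟩ hdF
  have h1 : c ≤ neg d := hdsa d c hdc
  have h2 : neg d ∈ y.1.2 := aux_ncond y d hdF
  exact (aux_fiLt_iff _ _).1 hyx c ((aux_idl y).2.1 _ _ h2 h1) hc

include hdsa in
theorem aux_pseudoRefl (hcomp : ∀ a : L, a ⊓ neg a = ⊥) : PseudoRefl (fiLt (L := L) neg) := by
  intro x ⟨y, hyx⟩
  have hbot : (⊥ : L) ∉ x.1.1 := fun h =>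
    (aux_fiLt_iff _ _).1 hyx ⊥ (aux_bot_mem (aux_idl y)) h
  refine ⟨npair hdsa x.1.1 (aux_filt x), ?_, fun w hw => hw⟩
  rw [aux_fiLt_iff]
  rintro d ⟨c, hc, hdc⟩ hdF
  have h1 : c ⊓ d ∈ x.1.1 := (aux_filt x).2.2 c d hc hdF
  have h2 : c ⊓ d = ⊥ := le_antisymm ((inf_le_inf_left c hdc).trans (hcomp c).le) bot_le
  rw [h2] at h1
  exact hbot h1

include hdsa hneg1 hBoxMul hBoxTop hDiaAdd hDiaBot hInt in
theorem aux_modalFrame : IsModalFrame (fiLt neg) (fiR2 neg Box Dia) := by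
  intro x y z hxy hzy
  refine ⟨⟨(Set.Ici ⊤, {c | ∃ b ∈ z.1.2, c ≤ Box b}),
    ⟨⟨⊤, le_rfl⟩, fun _ _ h1 h2 => le_trans h1 h2, fun _ _ h1 h2 => le_inf h1 h2⟩,
    ⟨⟨⊥, ⊥, aux_bot_mem (aux_idl z), bot_le⟩,
     fun a b ⟨c, hc, hac⟩ hba => ⟨c, hc, hba.trans hac⟩,
     fun a b ⟨c, hc, hac⟩ ⟨c', hc', hbc'⟩ =>
       ⟨c ⊔ c', (aux_idl z).2.2 c c' hc hc',
        sup_le (hac.trans (aux_box_mono hBoxMul le_sup_left))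
          (hbc'.trans (aux_box_mono hBoxMul le_sup_right))⟩⟩,
    fun a ha => by
      rw [top_le_iff.1 ha, hneg1]
      exact ⟨⊥, aux_bot_mem (aux_idl z), bot_le⟩⟩, ?_, ?_⟩
  · apply (aux_fiLt_iff _ _).2
    rintro c ⟨b, hb, hcb⟩ hcF
    have h1 : Box b ∈ x.1.1 := (aux_filt x).2.1 c (Box b) hcF hcb
    exact (aux_fiLt_iff _ _).1 hzy b hb ((hxy b).1 h1)
  · intro x'' hx''
    refine ⟨rSucc hBoxMul hBoxTop hDiaAdd hDiaBot hInt x'',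
      aux_rSucc_R hBoxMul hBoxTop hDiaAdd hDiaBot hInt x'', ?_⟩
    rw [aux_fiLt_iff]
    intro b hb hbF
    exact (aux_fiLt_iff _ _).1 hx'' (Box b) ⟨b, hb, le_rfl⟩ hbF

include hdsa hneg1 hBoxMul hBoxTop hDiaAdd hDiaBot hInt in
theorem aux_additiveFrame : IsAdditiveFrame (fiLt neg) (fiR2 neg Box Dia) := by
  intro x y z hxy hyz
  have hF : IsFilt {c | ∃ b ∈ z.1.1, Dia b ≤ c} :=
    ⟨⟨Dia ⊤, ⊤, aux_top_mem (aux_filt z), le_rfl⟩,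
     fun a b ⟨c, hc, hca⟩ hab => ⟨c, hc, hca.trans hab⟩,
     fun a b ⟨c, hc, hca⟩ ⟨c', hc', hc'b⟩ =>
       ⟨c ⊓ c', (aux_filt z).2.2 c c' hc hc',
        le_inf ((aux_dia_mono hDiaAdd inf_le_left).trans hca)
          ((aux_dia_mono hDiaAdd inf_le_right).trans hc'b)⟩⟩
  refine ⟨npair hdsa _ hF, ?_, ?_⟩
  · rw [aux_fiLt_iff]
    rintro c hc ⟨b, hb, hbc⟩
    have h1 : Dia b ∈ x.1.2 := (aux_idl x).2.1 c (Dia b) hc hbc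
    exact (aux_fiLt_iff _ _).1 hyz b ((hxy b).2 h1) hb
  · intro x'' hx''
    refine ⟨rSucc hBoxMul hBoxTop hDiaAdd hDiaBot hInt x'',
      aux_rSucc_R hBoxMul hBoxTop hDiaAdd hDiaBot hInt x'', ?_⟩
    rw [aux_fiLt_iff]
    intro c hc hcF
    exact (aux_fiLt_iff _ _).1 hx'' (Dia c) hc ⟨c, hcF, le_rfl⟩

include hdsa hneg1 hBoxMul hBoxTop hDiaAdd hDiaBot hInt in
theorem aux_negativeFrame (hNeg : ∀ a : L, neg (Dia a) ≤ Box (neg a)) :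
    IsNegativeFrame (fiLt neg) (fiR2 neg Box Dia) (fiR2 neg Box Dia) := by
  intro x y z hxy hzy
  have hF : IsFilt {c | ∃ b ∈ z.1.1, Dia b ≤ c} :=
    ⟨⟨Dia ⊤, ⊤, aux_top_mem (aux_filt z), le_rfl⟩,
     fun a b ⟨c, hc, hca⟩ hab => ⟨c, hc, hca.trans hab⟩,
     fun a b ⟨c, hc, hca⟩ ⟨c', hc', hc'b⟩ =>
       ⟨c ⊓ c', (aux_filt z).2.2 c c' hc hc',
        le_inf ((aux_dia_mono hDiaAdd inf_le_left).trans hca)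
          ((aux_dia_mono hDiaAdd inf_le_right).trans hc'b)⟩⟩
  refine ⟨npair hdsa _ hF, ?_, ?_⟩
  · rw [aux_fiLt_iff]
    rintro d ⟨c, ⟨b, hb, hbc⟩, hdc⟩ hdF
    have h1 : d ≤ Box (neg b) :=
      hdc.trans ((aux_neg_antitone hdsa hbc).trans (hNeg b))
    have h2 : Box (neg b) ∈ x.1.1 := (aux_filt x).2.1 d _ hdF h1
    have h3 : neg b ∈ y.1.1 := (hxy (neg b)).1 h2
    exact (aux_fiLt_iff _ _).1 hzy (neg b) (aux_ncond z b hb) h3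
  · intro x'' hx''
    refine ⟨rSucc hBoxMul hBoxTop hDiaAdd hDiaBot hInt x'',
      aux_rSucc_R hBoxMul hBoxTop hDiaAdd hDiaBot hInt x'', ?_⟩
    rw [aux_fiLt_iff]
    intro c hc hcF
    exact (aux_fiLt_iff _ _).1 hx'' (Dia c) hc ⟨c, hcF, le_rfl⟩

end Stmt18Aux3
section Stmt18Aux4

variable {L : Type*} [Lattice L] [BoundedOrder L] {neg Box Dia : L → L}
variable (hdsa : ∀ a b : L, a ≤ neg b → b ≤ neg a) (hneg1 : neg ⊤ = ⊥)

theorem aux_basis {U : Set (FIX neg)}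
    (hU : TopologicalSpace.GenerateOpen (Set.range (fhat neg)) U) :
    ∀ x ∈ U, ∃ b : L, x ∈ fhat neg b ∧ fhat neg b ⊆ U := by
  induction hU with
  | basic U hU =>
      rintro x hx
      obtain ⟨b, rfl⟩ := hU
      exact ⟨b, hx, subset_rfl⟩
  | univ =>
      intro x _
      exact ⟨⊤, aux_top_mem (aux_filt x), fun _ _ => trivial⟩
  | inter U V hU hV ihU ihV =>
      intro x hx
      obtain ⟨b, hb1, hb2⟩ := ihU x hx.1
      obtain ⟨c, hc1, hc2⟩ := ihV x hx.2
      refine ⟨b ⊓ c, ?_, ?_⟩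
      · rw [aux_fhat_inf]; exact ⟨hb1, hc1⟩
      · rw [aux_fhat_inf]
        exact fun w ⟨hw1, hw2⟩ => ⟨hb2 hw1, hc2 hw2⟩
  | sUnion S hS ih =>
      rintro x ⟨U, hUS, hxU⟩
      obtain ⟨b, h1, h2⟩ := ih U hUS x hxU
      exact ⟨b, h1, h2.trans (Set.subset_sUnion_of_mem hUS)⟩

theorem aux_finsetSup_mem_idl {I : Set L} (hI : IsIdl I) {ι : Type*} (t : Finset ι)
    (f : ι → L) (h : ∀ i ∈ t, f i ∈ I) : t.sup f ∈ I := by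
  classical
  induction t using Finset.induction_on with
  | empty => simpa using aux_bot_mem hI
  | insert _ _ hni ih =>
      rw [Finset.sup_insert]
      exact hI.2.2 _ _ (h _ (Finset.mem_insert_self _ _))
        (ih fun i hi => h i (Finset.mem_insert_of_mem hi))

include hdsa in
theorem aux_fhat_finsetSup {ι : Type*} (t : Finset ι) (f : ι → L) :
    fhat neg (t.sup f) ⊆ clOp (fiLt neg) (⋃ i ∈ t, fhat neg (f i)) := by
  intro x hx y hy
  have hns : t.sup f ∉ y.1.2 := fun h => (aux_fiLt_iff _ _).1 hy _ h hx
  have hex : ∃ i ∈ t, f i ∉ y.1.2 := by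
    by_contra h
    push_neg at h
    exact hns (aux_finsetSup_mem_idl (aux_idl y) t f h)
  obtain ⟨i, hit, hfi⟩ := hex
  exact ⟨ppair hdsa (f i) (neg (f i)) le_rfl, aux_lt_ppair.2 hfi,
    Set.mem_biUnion hit le_rfl⟩

include hdsa hneg1 in
theorem aux_image_char (A : Set (FIX neg)) :
    (∃ a : L, fhat neg a = A) ↔
      (clOp (fiLt neg) A = A ∧
       @IsCompact _ (TopologicalSpace.generateFrom (Set.range (fhat neg))) A ∧
       @IsOpen _ (TopologicalSpace.generateFrom (Set.range (fhat neg))) A) := by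
  letI : TopologicalSpace (FIX neg) := TopologicalSpace.generateFrom (Set.range (fhat neg))
  constructor
  · rintro ⟨a, rfl⟩
    refine ⟨aux_clOp_fhat hdsa hneg1 a, ?_, ?_⟩
    · apply isCompact_of_finite_subcover
      intro ι U hU hcov
      have hx : ppair hdsa a (neg a) le_rfl ∈ fhat neg a := le_rfl
      obtain ⟨i, hi⟩ := Set.mem_iUnion.1 (hcov hx)
      obtain ⟨b, hb1, hb2⟩ := aux_basis (hU i) _ hi
      refine ⟨{i}, fun w hw => ?_⟩
      have hab : a ≤ b := hb1
      exact Set.mem_biUnion (Finset.mem_singleton_self i) (hb2 (aux_fhat_mono hab hw))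
    · exact TopologicalSpace.GenerateOpen.basic _ ⟨a, rfl⟩
  · rintro ⟨hfix, hcomp, hopen⟩
    have hcov : A ⊆ ⋃ b : {b : L // fhat neg b ⊆ A}, fhat neg b.1 := by
      intro x hx
      obtain ⟨b, h1, h2⟩ := aux_basis hopen x hx
      exact Set.mem_iUnion.2 ⟨⟨b, h2⟩, h1⟩
    obtain ⟨t, ht⟩ := hcomp.elim_finite_subcover (fun b : {b : L // fhat neg b ⊆ A} => fhat neg b.1)
      (fun b => TopologicalSpace.GenerateOpen.basic _ ⟨b.1, rfl⟩) hcov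
    refine ⟨t.sup (fun b => b.1), subset_antisymm ?_ ?_⟩
    · refine (aux_fhat_finsetSup hdsa t _).trans ?_
      exact (aux_clOp_mono (Set.iUnion₂_subset fun b _ => b.2)).trans hfix.subset
    · intro x hx
      obtain ⟨b, hbt, hxb⟩ := Set.mem_iUnion₂.1 (ht hx)
      exact aux_fhat_mono (Finset.le_sup hbt) hxb

end Stmt18Aux4
theorem stmt_18 {L : Type*} [Lattice L] [BoundedOrder L] (neg Box Dia : L → L)
    (hdsa : ∀ a b : L, a ≤ neg b → b ≤ neg a) (hneg1 : neg ⊤ = ⊥)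
    (hBoxMul : ∀ a b : L, Box (a ⊓ b) = Box a ⊓ Box b) (hBoxTop : Box ⊤ = ⊤)
    (hDiaAdd : ∀ a b : L, Dia (a ⊔ b) = Dia a ⊔ Dia b) (hDiaBot : Dia ⊥ = ⊥)
    (hInt : ∀ a : L, Dia (neg a) ≤ neg (Box a))
    (R Q : FIX neg → FIX neg → Prop)
    (hR : R = fiR2 neg Box Dia) (hQ : Q = R) :
    (IsModalFrame (fiLt neg) R ∧ IsAdditiveFrame (fiLt neg) Q ∧ Q = R ∧
      PseudoSymm (fiLt neg)) ∧
    (Function.Injective (fhat neg) ∧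
     (∀ a : L, clOp (fiLt neg) (fhat neg a) = fhat neg a) ∧
     (∀ a b : L, fhat neg (a ⊓ b) = fhat neg a ∩ fhat neg b) ∧
     (∀ a b : L, fhat neg (a ⊔ b) = clOp (fiLt neg) (fhat neg a ∪ fhat neg b)) ∧
     fhat neg (⊤ : L) = (Set.univ : Set (FIX neg)) ∧
     fhat neg (⊥ : L) = clOp (fiLt neg) (∅ : Set (FIX neg)) ∧
     (∀ a : L, fhat neg (neg a) = ngOp (fiLt neg) (fhat neg a)) ∧
     (∀ a : L, fhat neg (Box a) = boxOp R (fhat neg a)) ∧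
     (∀ a : L, fhat neg (Dia a) = diaOp (fiLt neg) Q (fhat neg a)) ∧
     (∀ A : Set (FIX neg),
       (∃ a : L, fhat neg a = A) ↔
         (clOp (fiLt neg) A = A ∧
          @IsCompact _ (TopologicalSpace.generateFrom (Set.range (fhat neg))) A ∧
          @IsOpen _ (TopologicalSpace.generateFrom (Set.range (fhat neg))) A))) ∧
    ((∀ a : L, a ⊓ neg a = ⊥) → PseudoRefl (fiLt neg)) ∧
    ((∀ a : L, neg (Dia a) ≤ Box (neg a)) → IsNegativeFrame (fiLt neg) R Q) := by
  subst hQ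
  subst hR
  exact ⟨⟨aux_modalFrame hdsa hneg1 hBoxMul hBoxTop hDiaAdd hDiaBot hInt,
      aux_additiveFrame hdsa hneg1 hBoxMul hBoxTop hDiaAdd hDiaBot hInt, rfl,
      aux_pseudoSymm hdsa⟩,
    ⟨aux_fhat_inj hdsa, aux_clOp_fhat hdsa hneg1, aux_fhat_inf,
     aux_fhat_sup hdsa hneg1, aux_fhat_top, aux_fhat_bot hdsa hneg1,
     aux_fhat_neg hdsa,
     aux_fhat_box hBoxMul hBoxTop hDiaAdd hDiaBot hInt,
     aux_fhat_dia hdsa hneg1 hBoxMul hBoxTop hDiaAdd hDiaBot hInt,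
     aux_image_char hdsa hneg1⟩,
    aux_pseudoRefl hdsa,
    aux_negativeFrame hdsa hneg1 hBoxMul hBoxTop hDiaAdd hDiaBot hInt⟩
end
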